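/- Let l₀, l₁, l₂, s > 0 and let I ⊆ (-π/2, π/2) be an open interval. Let k : I → ℝ be differentiable with k(θ) > 0 for all θ ∈ I, and suppose the suspension constraint l₁ cos θ / g₁ + l₂ cos θ / g₂ + 2 l₀ cos θ = s holds for all θ ∈ I, where g₁ = √(k(θ)² - 2k(θ) sin θ + 1) and g₂ = √(k(θ)² + 2k(θ) sin θ + 1). Then at every θ ∈ I where l₁(k - sin θ)/g₁³ + l₂(k + sin θ)/g₂³ ≠ 0, the derivative of k satisfies k'(θ) = -[ (l₁/g₁³)(k - sin θ)(k sin θ - 1) + (l₂/g₂³)(k + sin θ)(k sin θ + 1) + 2 l₀ sin θ ] / ( [ l₁(k - sin θ)/g₁³ + l₂(k + sin θ)/g₂³ ] cos θ ). -/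

import Mathlib

set_option maxHeartbeats 1000000


open Real

/-- Implicit derivative of `k` along the suspension
constraint `l₁ cosθ/g₁ + l₂ cosθ/g₂ + 2l₀ cosθ = s`, where
`g₁ = √(k² - 2k sinθ + 1)`, `g₂ = √(k² + 2k sinθ + 1)`. -/
theorem stmt_12 (l₀ l₁ l₂ s : ℝ)
    (hl₀ : 0 < l₀) (hl₁ : 0 < l₁) (hl₂ : 0 < l₂) (hs : 0 < s)
    (a b : ℝ) (hI : Set.Ioo a b ⊆ Set.Ioo (-(π/2)) (π/2))
    (k : ℝ → ℝ)
    (hkdiff : ∀ θ ∈ Set.Ioo a b, DifferentiableAt ℝ k θ)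
    (hkpos : ∀ θ ∈ Set.Ioo a b, 0 < k θ)
    (g₁ g₂ : ℝ → ℝ)
    (hg₁ : ∀ θ : ℝ, g₁ θ = Real.sqrt ((k θ)^2 - 2 * k θ * Real.sin θ + 1))
    (hg₂ : ∀ θ : ℝ, g₂ θ = Real.sqrt ((k θ)^2 + 2 * k θ * Real.sin θ + 1))
    (hcon : ∀ θ ∈ Set.Ioo a b,
      l₁ * Real.cos θ / g₁ θ + l₂ * Real.cos θ / g₂ θ + 2 * l₀ * Real.cos θ = s) :
    ∀ θ ∈ Set.Ioo a b,
      l₁ * (k θ - Real.sin θ) / (g₁ θ)^3 + l₂ * (k θ + Real.sin θ) / (g₂ θ)^3 ≠ 0 →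
      deriv k θ
        = -((l₁ / (g₁ θ)^3) * (k θ - Real.sin θ) * (k θ * Real.sin θ - 1)
            + (l₂ / (g₂ θ)^3) * (k θ + Real.sin θ) * (k θ * Real.sin θ + 1)
            + 2 * l₀ * Real.sin θ)
          / ((l₁ * (k θ - Real.sin θ) / (g₁ θ)^3
              + l₂ * (k θ + Real.sin θ) / (g₂ θ)^3) * Real.cos θ) := by
  have hg₁f : g₁ = fun θ => Real.sqrt ((k θ)^2 - 2 * k θ * Real.sin θ + 1) := funext hg₁
  have hg₂f : g₂ = fun θ => Real.sqrt ((k θ)^2 + 2 * k θ * Real.sin θ + 1) := funext hg₂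
  subst hg₁f hg₂f
  intro θ₀ hθ₀ hne
  beta_reduce at hne ⊢
  set K := k θ₀ with hK
  set S := Real.sin θ₀ with hS
  set C := Real.cos θ₀ with hC
  have hθI := hI hθ₀
  have hCpos : 0 < C := Real.cos_pos_of_mem_Ioo hθI
  have hpyth : S^2 + C^2 = 1 := Real.sin_sq_add_cos_sq θ₀
  have hu₁pos : 0 < K^2 - 2*K*S + 1 := by nlinarith [sq_nonneg (K - S)]
  have hu₂pos : 0 < K^2 + 2*K*S + 1 := by nlinarith [sq_nonneg (K + S)]
  set G₁ := Real.sqrt (K^2 - 2*K*S + 1) with hG₁def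
  set G₂ := Real.sqrt (K^2 + 2*K*S + 1) with hG₂def
  have hG₁pos : 0 < G₁ := Real.sqrt_pos.mpr hu₁pos
  have hG₂pos : 0 < G₂ := Real.sqrt_pos.mpr hu₂pos
  have hG₁sq : G₁^2 = K^2 - 2*K*S + 1 := Real.sq_sqrt hu₁pos.le
  have hG₂sq : G₂^2 = K^2 + 2*K*S + 1 := Real.sq_sqrt hu₂pos.le
  -- derivative of k
  set D := deriv k θ₀ with hD
  have hk : HasDerivAt k D θ₀ := (hkdiff θ₀ hθ₀).hasDerivAt
  have hsin : HasDerivAt Real.sin C θ₀ := Real.hasDerivAt_sin θ₀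
  have hcos : HasDerivAt Real.cos (-S) θ₀ := Real.hasDerivAt_cos θ₀
  -- derivative of g₁
  have hu₁ : HasDerivAt (fun θ => (k θ)^2 - 2 * k θ * Real.sin θ + 1)
      (2*((K-S)*D - K*C)) θ₀ := by
    have h1 : HasDerivAt (fun θ => (k θ)^2) (2*K*D) θ₀ := by
      have := hk.fun_pow 2
      exact this.congr_deriv (by push_cast; ring)
    have h2 : HasDerivAt (fun θ => 2 * k θ * Real.sin θ) (2*D*S + 2*K*C) θ₀ := by
      have := (hk.const_mul 2).mul hsin
      exact this.congr_deriv (by ring)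
    have := (h1.sub h2).add_const 1
    exact this.congr_deriv (by ring)
  have hG₁' : HasDerivAt (fun θ => Real.sqrt ((k θ)^2 - 2 * k θ * Real.sin θ + 1))
      (((K-S)*D - K*C)/G₁) θ₀ := by
    have := hu₁.sqrt (by simp only [← hK, ← hS]; positivity)
    convert this using 1
    rw [← hK, ← hS, ← hG₁def]
    field_simp
  have hu₂ : HasDerivAt (fun θ => (k θ)^2 + 2 * k θ * Real.sin θ + 1)
      (2*((K+S)*D + K*C)) θ₀ := by
    have h1 : HasDerivAt (fun θ => (k θ)^2) (2*K*D) θ₀ := by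
      have := hk.fun_pow 2
      exact this.congr_deriv (by push_cast; ring)
    have h2 : HasDerivAt (fun θ => 2 * k θ * Real.sin θ) (2*D*S + 2*K*C) θ₀ := by
      have := (hk.const_mul 2).mul hsin
      exact this.congr_deriv (by ring)
    have := (h1.add h2).add_const 1
    exact this.congr_deriv (by ring)
  have hG₂' : HasDerivAt (fun θ => Real.sqrt ((k θ)^2 + 2 * k θ * Real.sin θ + 1))
      (((K+S)*D + K*C)/G₂) θ₀ := by
    have := hu₂.sqrt (by simp only [← hK, ← hS]; positivity)
    convert this using 1
    rw [← hK, ← hS, ← hG₂def]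
    field_simp
  -- derivative of constraint function
  have ht1 : HasDerivAt (fun θ => l₁ * Real.cos θ /
      Real.sqrt ((k θ)^2 - 2 * k θ * Real.sin θ + 1))
      ((l₁ * (-S) * G₁ - l₁ * C * (((K-S)*D - K*C)/G₁)) / G₁^2) θ₀ := by
    have := (hcos.const_mul l₁).div hG₁' (by rw [← hK, ← hS, ← hG₁def]; exact hG₁pos.ne')
    refine this.congr_deriv ?_
    rw [← hK, ← hS, ← hG₁def]
  have ht2 : HasDerivAt (fun θ => l₂ * Real.cos θ /
      Real.sqrt ((k θ)^2 + 2 * k θ * Real.sin θ + 1))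
      ((l₂ * (-S) * G₂ - l₂ * C * (((K+S)*D + K*C)/G₂)) / G₂^2) θ₀ := by
    have := (hcos.const_mul l₂).div hG₂' (by rw [← hK, ← hS, ← hG₂def]; exact hG₂pos.ne')
    refine this.congr_deriv ?_
    rw [← hK, ← hS, ← hG₂def]
  have ht3 : HasDerivAt (fun θ => 2 * l₀ * Real.cos θ) (2 * l₀ * (-S)) θ₀ :=
    hcos.const_mul (2 * l₀)
  have hF : HasDerivAt (fun θ => l₁ * Real.cos θ /
      Real.sqrt ((k θ)^2 - 2 * k θ * Real.sin θ + 1)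
      + l₂ * Real.cos θ / Real.sqrt ((k θ)^2 + 2 * k θ * Real.sin θ + 1)
      + 2 * l₀ * Real.cos θ)
      ((l₁ * (-S) * G₁ - l₁ * C * (((K-S)*D - K*C)/G₁)) / G₁^2
        + (l₂ * (-S) * G₂ - l₂ * C * (((K+S)*D + K*C)/G₂)) / G₂^2
        + 2 * l₀ * (-S)) θ₀ := (ht1.add ht2).add ht3
  have hF0 : HasDerivAt (fun θ => l₁ * Real.cos θ /
      Real.sqrt ((k θ)^2 - 2 * k θ * Real.sin θ + 1)
      + l₂ * Real.cos θ / Real.sqrt ((k θ)^2 + 2 * k θ * Real.sin θ + 1)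
      + 2 * l₀ * Real.cos θ) 0 θ₀ := by
    have hev : (fun θ => l₁ * Real.cos θ /
        Real.sqrt ((k θ)^2 - 2 * k θ * Real.sin θ + 1)
        + l₂ * Real.cos θ / Real.sqrt ((k θ)^2 + 2 * k θ * Real.sin θ + 1)
        + 2 * l₀ * Real.cos θ) =ᶠ[nhds θ₀] (fun _ => s) := by
      filter_upwards [isOpen_Ioo.mem_nhds hθ₀] with θ hθ
      exact hcon θ hθ
    exact (hasDerivAt_const θ₀ s).congr_of_eventuallyEq hev
  have heq : (l₁ * (-S) * G₁ - l₁ * C * (((K-S)*D - K*C)/G₁)) / G₁^2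
        + (l₂ * (-S) * G₂ - l₂ * C * (((K+S)*D + K*C)/G₂)) / G₂^2
        + 2 * l₀ * (-S) = 0 := hF.unique hF0
  -- final algebra
  have hden : (l₁ * (K - S) / G₁^3 + l₂ * (K + S) / G₂^3) * C ≠ 0 :=
    mul_ne_zero hne hCpos.ne'
  rw [eq_div_iff hden]
  field_simp at heq ⊢
  linear_combination -heq - S*l₁*G₂^3*hG₁sq - S*l₂*G₁^3*hG₂sq + K*(l₁*G₂^3 - l₂*G₁^3)*hpyth
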